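/- arXiv:1801.02748 — 2 statements merged into one kernel-verified Lean document; each statement's English description precedes it below -/
import Mathlib

section
/- Let $X_1, \ldots, X_d$ be independent identically distributed integrable real random variables and let $a^{(1)}, \ldots, a^{(d)}$ be positive reals with $\sum_{i=1}^d a^{(i)} = d$. Then for every convex function $c: \mathbb{R} \to \mathbb{R}$ for which both expectations exist, $\mathsf{E}[c(X_1 + \cdots + X_d)] \leq \mathsf{E}[c(a^{(1)} X_1 + \cdots + a^{(d)} X_d)]$; i.e., the unweighted sum is smaller than the weighted sum in the convex order. -/
open MeasureTheory ProbabilityTheory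

lemma aux_joint_law {Ω : Type*} [MeasurableSpace Ω] (μ : Measure Ω) [IsProbabilityMeasure μ]
    {d : ℕ} {X : Fin d → Ω → ℝ} (hmeas : ∀ i, Measurable (X i))
    (hindep : iIndepFun X μ) :
    Measure.map (fun ω i => X i ω) μ = Measure.pi (fun i => μ.map (X i)) := by
  refine (Measure.pi_eq fun s hs => ?_).symm
  rw [Measure.map_apply (measurable_pi_iff.mpr hmeas) (MeasurableSet.univ_pi hs)]
  have h1 : (fun ω i => X i ω) ⁻¹' Set.univ.pi s = ⋂ i ∈ Finset.univ, X i ⁻¹' s i := by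
    ext ω; simp [Set.mem_pi]
  rw [h1, hindep.measure_inter_preimage_eq_mul Finset.univ (fun i _ => hs i)]
  exact Finset.prod_congr rfl fun i _ => (Measure.map_apply (hmeas i) (hs i)).symm

lemma aux_pi_reindex {d : ℕ} (ν : Measure ℝ) [IsProbabilityMeasure ν] (e : Fin d ≃ Fin d) :
    Measure.map (fun v : Fin d → ℝ => fun i => v (e i)) (Measure.pi fun _ => ν)
      = Measure.pi (fun _ => ν) := by
  refine (Measure.pi_eq (μ := fun _ => ν) fun s hs => ?_).symm
  rw [Measure.map_apply (by measurability) (MeasurableSet.univ_pi hs)]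
  have h1 : (fun v : Fin d → ℝ => fun i => v (e i)) ⁻¹' Set.univ.pi s
      = Set.univ.pi (fun j => s (e.symm j)) := by
    ext v
    simp only [Set.mem_preimage, Set.mem_pi, Set.mem_univ, forall_true_left, true_implies]
    exact ⟨fun h j => by simpa using h (e.symm j), fun h i => by simpa using h (e i)⟩
  rw [h1, Measure.pi_pi]
  exact Fintype.prod_equiv e.symm _ _ fun j => rfl

lemma aux_perm_coeff {d : ℕ} (hd : 1 ≤ d) (a : Fin d → ℝ) (hsum : ∑ i, a i = d) (i : Fin d) :
    ∑ σ : Equiv.Perm (Fin d), a (σ i) = (Fintype.card (Equiv.Perm (Fin d)) : ℝ) := by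
  have hconst : ∀ i' : Fin d, ∑ σ : Equiv.Perm (Fin d), a (σ i')
      = ∑ σ : Equiv.Perm (Fin d), a (σ i) := by
    intro i'
    exact Fintype.sum_equiv (Equiv.mulRight (Equiv.swap i i')) _ _
      (fun σ => by simp [Equiv.Perm.mul_apply])
  have h1 : (d : ℝ) * ∑ σ : Equiv.Perm (Fin d), a (σ i)
      = (Fintype.card (Equiv.Perm (Fin d)) : ℝ) * d := by
    calc (d : ℝ) * ∑ σ : Equiv.Perm (Fin d), a (σ i)
        = ∑ _i' : Fin d, ∑ σ : Equiv.Perm (Fin d), a (σ i) := by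
          simp [Finset.sum_const, mul_comm]
      _ = ∑ i' : Fin d, ∑ σ : Equiv.Perm (Fin d), a (σ i') :=
          Finset.sum_congr rfl fun i' _ => (hconst i').symm
      _ = ∑ σ : Equiv.Perm (Fin d), ∑ i' : Fin d, a (σ i') := Finset.sum_comm
      _ = ∑ _σ : Equiv.Perm (Fin d), (d : ℝ) := by
          refine Finset.sum_congr rfl fun σ _ => ?_
          rw [Equiv.sum_comp σ a, hsum]
      _ = (Fintype.card (Equiv.Perm (Fin d)) : ℝ) * d := by
          simp [Finset.sum_const, mul_comm]
  have hd0 : (d : ℝ) ≠ 0 := Nat.cast_ne_zero.mpr (by omega)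
  rw [mul_comm ((Fintype.card (Equiv.Perm (Fin d))) : ℝ) (d : ℝ)] at h1
  exact mul_left_cancel₀ hd0 h1

lemma aux_key {Ω : Type*} [MeasurableSpace Ω] (μ : Measure Ω) [IsProbabilityMeasure μ]
    (d : ℕ) (hd : 1 ≤ d) (X : Fin d → Ω → ℝ) (hmeas : ∀ i, Measurable (X i))
    (hindep : iIndepFun X μ)
    (hident : ∀ i j, IdentDistrib (X i) (X j) μ μ)
    (a : Fin d → ℝ) (hpos : ∀ i, 0 < a i) (hsum : ∑ i, a i = d)
    (c : ℝ → ℝ) (hconv : ConvexOn ℝ Set.univ c)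
    (hcX : Integrable (fun ω => c (∑ i, X i ω)) μ)
    (hcY : Integrable (fun ω => c (∑ i, a i * X i ω)) μ) :
    μ[fun ω => c (∑ i, X i ω)] ≤ μ[fun ω => c (∑ i, a i * X i ω)] := by
  classical
  set P := Equiv.Perm (Fin d)
  set N : ℕ := Fintype.card P with hN
  have hNpos : 0 < N := Fintype.card_pos
  have hN0 : (N : ℝ) ≠ 0 := Nat.cast_ne_zero.mpr hNpos.ne'
  have hc_cont : Continuous c := by
    have := hconv.locallyLipschitz
    exact this.continuous
  have hc_meas : Measurable c := hc_cont.measurable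
  -- identically distributed after permutation
  have i0 : Fin d := ⟨0, by omega⟩
  set ν : Measure ℝ := μ.map (X i0) with hν
  haveI : IsProbabilityMeasure ν := Measure.isProbabilityMeasure_map (hmeas i0).aemeasurable
  have hνi : ∀ i, μ.map (X i) = ν := fun i => (hident i i0).map_eq
  have hTlaw : Measure.map (fun ω i => X i ω) μ = Measure.pi (fun _ => ν) := by
    rw [aux_joint_law μ hmeas hindep]
    exact congrArg Measure.pi (funext hνi)
  have hID : ∀ σ : P, IdentDistrib (fun ω => ∑ i, a (σ i) * X i ω)
      (fun ω => ∑ i, a i * X i ω) μ μ := by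
    intro σ
    have hTmeas : Measurable (fun ω i => X i ω) := measurable_pi_iff.mpr hmeas
    have hg : Measurable (fun v : Fin d → ℝ => ∑ i, a i * v i) := by
      exact Finset.measurable_sum _ fun i _ => (measurable_pi_apply i).const_mul _
    have hre : Measurable (fun v : Fin d → ℝ => fun i => v (σ.symm i)) := by measurability
    have hIDvec : IdentDistrib (fun ω => fun i => X (σ.symm i) ω) (fun ω i => X i ω) μ μ := by
      refine ⟨(hre.comp hTmeas).aemeasurable, hTmeas.aemeasurable, ?_⟩
      have : (fun ω => fun i => X (σ.symm i) ω)
          = (fun v : Fin d → ℝ => fun i => v (σ.symm i)) ∘ (fun ω i => X i ω) := rfl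
      rw [this, ← Measure.map_map hre hTmeas, hTlaw, aux_pi_reindex ν σ.symm]
    have h2 := hIDvec.comp hg
    have e1 : ((fun v : Fin d → ℝ => ∑ i, a i * v i) ∘ fun ω => fun i => X (σ.symm i) ω)
        = fun ω => ∑ i, a (σ i) * X i ω := by
      funext ω
      simp only [Function.comp_apply]
      rw [← Equiv.sum_comp σ (fun i => a i * X (σ.symm i) ω)]
      exact Finset.sum_congr rfl fun j _ => by simp
    have e2 : ((fun v : Fin d → ℝ => ∑ i, a i * v i) ∘ fun ω i => X i ω)
        = fun ω => ∑ i, a i * X i ω := rfl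
    rw [e1, e2] at h2
    exact h2
  have hIDc : ∀ σ : P, IdentDistrib (fun ω => c (∑ i, a (σ i) * X i ω))
      (fun ω => c (∑ i, a i * X i ω)) μ μ := fun σ => (hID σ).comp hc_meas
  have hIntσ : ∀ σ : P, Integrable (fun ω => c (∑ i, a (σ i) * X i ω)) μ :=
    fun σ => ((hIDc σ).integrable_iff).mpr hcY
  have hEσ : ∀ σ : P, μ[fun ω => c (∑ i, a (σ i) * X i ω)] = μ[fun ω => c (∑ i, a i * X i ω)] :=
    fun σ => (hIDc σ).integral_eq
  -- pointwise Jensen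
  have hJ : ∀ ω, c (∑ i, X i ω) ≤ ∑ σ : P, (N : ℝ)⁻¹ * c (∑ i, a (σ i) * X i ω) := by
    intro ω
    have h₁ : ∑ _σ : P, (N : ℝ)⁻¹ = 1 := by
      rw [Finset.sum_const, nsmul_eq_mul]
      simp [hN, mul_inv_cancel₀ hN0]
    have hjen := hconv.map_sum_le (t := Finset.univ) (w := fun _ => (N : ℝ)⁻¹)
      (p := fun σ : P => ∑ i, a (σ i) * X i ω)
      (fun _ _ => by positivity) h₁ (fun _ _ => Set.mem_univ _)
    have hkey : ∑ σ : P, (N : ℝ)⁻¹ • (∑ i, a (σ i) * X i ω) = ∑ i, X i ω := by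
      simp only [smul_eq_mul, ← Finset.mul_sum]
      rw [Finset.sum_comm]
      have : ∀ i, ∑ σ : P, a (σ i) * X i ω = (N : ℝ) * X i ω := by
        intro i
        rw [← Finset.sum_mul, aux_perm_coeff hd a hsum i]
      simp only [this]
      rw [← Finset.mul_sum, ← mul_assoc, inv_mul_cancel₀ hN0, one_mul]
    rw [hkey] at hjen
    simpa [smul_eq_mul] using hjen
  -- put it together
  calc μ[fun ω => c (∑ i, X i ω)]
      ≤ μ[fun ω => ∑ σ : P, (N : ℝ)⁻¹ * c (∑ i, a (σ i) * X i ω)] := by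
        refine integral_mono hcX ?_ hJ
        exact integrable_finset_sum _ fun σ _ => (hIntσ σ).const_mul _
    _ = ∑ σ : P, (N : ℝ)⁻¹ * μ[fun ω => c (∑ i, a (σ i) * X i ω)] := by
        rw [integral_finset_sum _ fun σ _ => (hIntσ σ).const_mul _]
        exact Finset.sum_congr rfl fun σ _ => integral_const_mul _ _
    _ = ∑ _σ : P, (N : ℝ)⁻¹ * μ[fun ω => c (∑ i, a i * X i ω)] :=
        Finset.sum_congr rfl fun σ _ => by rw [hEσ σ]
    _ = μ[fun ω => c (∑ i, a i * X i ω)] := by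
        rw [Finset.sum_const, nsmul_eq_mul, ← mul_assoc]
        simp [hN, mul_inv_cancel₀ hN0]

theorem stmt_2 {Ω : Type*} [MeasurableSpace Ω] (μ : Measure Ω) [IsProbabilityMeasure μ]
    (d : ℕ) (hd : 1 ≤ d) (X : Fin d → Ω → ℝ)
    (hindep : iIndepFun X μ)
    (hident : ∀ i j, IdentDistrib (X i) (X j) μ μ)
    (hint : ∀ i, Integrable (X i) μ)
    (a : Fin d → ℝ) (hpos : ∀ i, 0 < a i) (hsum : ∑ i, a i = d)
    (c : ℝ → ℝ) (hconv : ConvexOn ℝ Set.univ c)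
    (hcX : Integrable (fun ω => c (∑ i, X i ω)) μ)
    (hcY : Integrable (fun ω => c (∑ i, a i * X i ω)) μ) :
    μ[fun ω => c (∑ i, X i ω)] ≤ μ[fun ω => c (∑ i, a i * X i ω)] := by
  classical
  have hae : ∀ i, AEMeasurable (X i) μ := fun i => (hident i i).aemeasurable_fst
  set X' : Fin d → Ω → ℝ := fun i => (hae i).mk (X i) with hX'
  have hmeas : ∀ i, Measurable (X' i) := fun i => (hae i).measurable_mk
  have hXae : ∀ i, X i =ᵐ[μ] X' i := fun i => (hae i).ae_eq_mk
  have hall : ∀ᵐ ω ∂μ, ∀ i, X i ω = X' i ω := ae_all_iff.mpr hXae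
  -- transfer independence
  have hindep' : iIndepFun X' μ := by
    rw [iIndepFun_iff_measure_inter_preimage_eq_mul]
    rw [iIndepFun_iff_measure_inter_preimage_eq_mul] at hindep
    intro S sets hsets
    have h1 : (⋂ i ∈ S, X' i ⁻¹' sets i) =ᵐ[μ] (⋂ i ∈ S, X i ⁻¹' sets i) := by
      rw [Filter.eventuallyEq_set]
      filter_upwards [hall] with ω hω
      simp only [Set.mem_iInter, Set.mem_preimage]
      exact ⟨fun h i hi => by rw [hω i]; exact h i hi, fun h i hi => by rw [← hω i]; exact h i hi⟩
    rw [measure_congr h1, hindep S hsets]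
    exact Finset.prod_congr rfl fun i hi =>
      measure_congr (by rw [Filter.eventuallyEq_set]; filter_upwards [hXae i] with ω hω; simp [hω])
  -- transfer identical distribution
  have hid : ∀ i, IdentDistrib (X i) (X' i) μ μ := fun i => IdentDistrib.of_ae_eq (hae i) (hXae i)
  have hident' : ∀ i j, IdentDistrib (X' i) (X' j) μ μ := fun i j =>
    ((hid i).symm.trans (hident i j)).trans (hid j)
  -- transfer integrability of compositions
  have hsum1 : (fun ω => c (∑ i, X i ω)) =ᵐ[μ] (fun ω => c (∑ i, X' i ω)) := by
    filter_upwards [hall] with ω hω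
    rw [Finset.sum_congr rfl fun i _ => hω i]
  have hsum2 : (fun ω => c (∑ i, a i * X i ω)) =ᵐ[μ] (fun ω => c (∑ i, a i * X' i ω)) := by
    filter_upwards [hall] with ω hω
    rw [Finset.sum_congr rfl fun i _ => by rw [hω i]]
  have hcX' : Integrable (fun ω => c (∑ i, X' i ω)) μ := hcX.congr hsum1
  have hcY' : Integrable (fun ω => c (∑ i, a i * X' i ω)) μ := hcY.congr hsum2
  have e1 : μ[fun ω => c (∑ i, X i ω)] = μ[fun ω => c (∑ i, X' i ω)] :=
    integral_congr_ae (f := fun ω => c (∑ i, X i ω)) (g := fun ω => c (∑ i, X' i ω)) hsum1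
  have e2 : μ[fun ω => c (∑ i, a i * X i ω)] = μ[fun ω => c (∑ i, a i * X' i ω)] :=
    integral_congr_ae (f := fun ω => c (∑ i, a i * X i ω))
      (g := fun ω => c (∑ i, a i * X' i ω)) hsum2
  rw [e1, e2]
  exact aux_key μ d hd X' hmeas hindep' hident' a hpos hsum c hconv hcX' hcY'
end

section
/- Let $X_1, \ldots, X_d$ be i.i.d. nonnegative random variables with finite variance and let $a^{(1)}, \ldots, a^{(d)}$ be positive reals summing to $d$. Then for every real $t$, $\mathsf{E}[\max(X_1 + \cdots + X_d - t, 0)] \leq \mathsf{E}[\max(a^{(1)} X_1 + \cdots + a^{(d)} X_d - t, 0)]$. -/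
open MeasureTheory ProbabilityTheory

/-- AEMeasurability of the joint map. -/
lemma aux_aemeasurable_pi {Ω : Type*} [MeasurableSpace Ω] {μ : Measure Ω}
    {d : ℕ} {X : Fin d → Ω → ℝ} (hm : ∀ i, AEMeasurable (X i) μ) :
    AEMeasurable (fun ω i => X i ω) μ := by
  choose g hgm hge using hm
  refine ⟨fun ω i => g i ω, measurable_pi_lambda _ hgm, ?_⟩
  filter_upwards [MeasureTheory.ae_all_iff.mpr hge] with ω hω
  funext i
  exact hω i

/-- The joint law of an independent family is the product of the marginals. -/
lemma aux_map_pi {Ω : Type*} [MeasurableSpace Ω] (μ : Measure Ω) [IsProbabilityMeasure μ]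
    {d : ℕ} (X : Fin d → Ω → ℝ)
    (hindep : iIndepFun X μ)
    (hm : ∀ i, AEMeasurable (X i) μ) :
    μ.map (fun ω i => X i ω) = Measure.pi (fun i => μ.map (X i)) := by
  haveI : ∀ i, IsProbabilityMeasure (μ.map (X i)) := fun i => Measure.isProbabilityMeasure_map (hm i)
  refine (Measure.pi_eq fun s hs => ?_).symm
  have hmeas : AEMeasurable (fun ω i => X i ω) μ := aux_aemeasurable_pi hm
  rw [Measure.map_apply_of_aemeasurable hmeas (MeasurableSet.univ_pi hs)]
  have hpre : (fun ω i => X i ω) ⁻¹' Set.pi Set.univ s = ⋂ i ∈ Finset.univ, X i ⁻¹' s i := by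
    ext ω; simp [Set.mem_pi]
  rw [hpre, hindep.measure_inter_preimage_eq_mul Finset.univ (fun i _ => hs i)]
  exact Finset.prod_congr rfl fun i _ =>
    (Measure.map_apply_of_aemeasurable (hm i) (hs i)).symm

/-- A product of identical factors is invariant under permutation of coordinates. -/
lemma aux_pi_perm {d : ℕ} (ν : Measure ℝ) [IsProbabilityMeasure ν] (π : Equiv.Perm (Fin d)) :
    (Measure.pi fun _ : Fin d => ν).map (fun v j => v (π j)) = Measure.pi fun _ : Fin d => ν := by
  refine (Measure.pi_eq fun s hs => ?_).symm
  have hT : Measurable (fun v : Fin d → ℝ => fun j => v (π j)) :=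
    measurable_pi_lambda _ fun j => measurable_pi_apply _
  rw [Measure.map_apply hT (MeasurableSet.univ_pi hs)]
  have hpre : (fun v : Fin d → ℝ => fun j => v (π j)) ⁻¹' Set.pi Set.univ s
      = Set.pi Set.univ (fun i => s (π.symm i)) := by
    ext v
    simp only [Set.mem_preimage, Set.mem_pi, Set.mem_univ, forall_true_left]
    exact ⟨fun h i => by simpa using h (π.symm i), fun h j => by simpa using h (π j)⟩
  rw [hpre, Measure.pi_pi]
  exact Equiv.prod_comp π.symm fun i => ν (s i)

theorem stmt_9 {Ω : Type*} [MeasurableSpace Ω] (μ : Measure Ω) [IsProbabilityMeasure μ]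
    (d : ℕ) (hd : 1 ≤ d) (X : Fin d → Ω → ℝ)
    (hindep : iIndepFun X μ)
    (hident : ∀ i j, IdentDistrib (X i) (X j) μ μ)
    (hXnn : ∀ i, ∀ᵐ ω ∂μ, 0 ≤ X i ω)
    (hL2 : ∀ i, MemLp (X i) 2 μ)
    (a : Fin d → ℝ) (hpos : ∀ i, 0 < a i) (hsum : ∑ i, a i = d) :
    ∀ t : ℝ, μ[fun ω => max (∑ i, X i ω - t) 0] ≤
      μ[fun ω => max (∑ i, a i * X i ω - t) 0] := by
  intro t
  haveI : NeZero d := ⟨Nat.one_le_iff_ne_zero.mp hd⟩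
  have hdR : (0:ℝ) < (d:ℝ) := by exact_mod_cast Nat.lt_of_lt_of_le Nat.zero_lt_one hd
  have hXm : ∀ i, AEMeasurable (X i) μ := fun i =>
    (hL2 i).aestronglyMeasurable.aemeasurable
  set ν : Measure ℝ := μ.map (X 0) with hν
  haveI : IsProbabilityMeasure ν := Measure.isProbabilityMeasure_map (hXm 0)
  have hmarg : ∀ i, μ.map (X i) = ν := fun i => (hident i 0).map_eq
  have hjoint : μ.map (fun ω i => X i ω) = Measure.pi fun _ : Fin d => ν := by
    rw [aux_map_pi μ X hindep hXm]
    congr 1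
    exact funext hmarg
  -- identical distribution of permuted weighted sums
  have hYk : ∀ π : Equiv.Perm (Fin d),
      IdentDistrib (fun ω => ∑ j, a j * X (π j) ω) (fun ω => ∑ j, a j * X j ω) μ μ := by
    intro π
    have hg : Measurable (fun v : Fin d → ℝ => ∑ j, a j * v j) :=
      Finset.measurable_sum _ fun j _ => (measurable_pi_apply j).const_mul _
    have hT : Measurable (fun v : Fin d → ℝ => fun j => v (π j)) :=
      measurable_pi_lambda _ fun j => measurable_pi_apply _
    have hmeas : AEMeasurable (fun ω i => X i ω) μ := aux_aemeasurable_pi hXm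
    have h1 : IdentDistrib (fun ω => fun j => X (π j) ω) (fun ω i => X i ω) μ μ := by
      refine ⟨aux_aemeasurable_pi fun j => hXm _, hmeas, ?_⟩
      have hcomp : (fun ω => fun j => X (π j) ω)
          = (fun v : Fin d → ℝ => fun j => v (π j)) ∘ (fun ω i => X i ω) := rfl
      rw [hcomp, ← AEMeasurable.map_map_of_aemeasurable hT.aemeasurable hmeas, hjoint,
        aux_pi_perm ν π]
    exact h1.comp hg
  -- integrability
  have hint : ∀ i, Integrable (X i) μ := fun i => (hL2 i).integrable one_le_two
  have hG : ∀ b : Fin d → ℝ, Integrable (fun ω => max (∑ i, b i * X i ω - t) 0) μ := by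
    intro b
    exact ((integrable_finset_sum _ fun i _ => (hint i).const_mul _).sub
      (integrable_const t)).pos_part
  have hFint : Integrable (fun ω => max (∑ i, X i ω - t) 0) μ :=
    ((integrable_finset_sum _ fun i _ => hint i).sub (integrable_const t)).pos_part
  -- equality of the expectations of the shifted weighted sums
  have hEq : ∀ k : Fin d,
      (∫ ω, max (∑ i, a (i + k) * X i ω - t) 0 ∂μ)
        = ∫ ω, max (∑ i, a i * X i ω - t) 0 ∂μ := by
    intro k
    set π : Equiv.Perm (Fin d) := Equiv.subRight k with hπ
    have hre : ∀ ω, (∑ i, a (i + k) * X i ω) = ∑ j, a j * X (π j) ω := by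
      intro ω
      refine Fintype.sum_equiv (Equiv.addRight k) _ _ fun i => ?_
      simp [hπ, Equiv.subRight]
    have hm : Measurable fun z : ℝ => max (z - t) 0 :=
      (measurable_id.sub measurable_const).max measurable_const
    have h2 := ((hYk π).comp hm).integral_eq
    calc (∫ ω, max (∑ i, a (i + k) * X i ω - t) 0 ∂μ)
        = ∫ ω, max (∑ j, a j * X (π j) ω - t) 0 ∂μ := by
          congr 1; funext ω; rw [hre ω]
      _ = ∫ ω, max (∑ j, a j * X j ω - t) 0 ∂μ := h2
  -- pointwise convexity inequality
  have hpt : ∀ ω, max (∑ i, X i ω - t) 0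
      ≤ (d:ℝ)⁻¹ * ∑ k : Fin d, max (∑ i, a (i + k) * X i ω - t) 0 := by
    intro ω
    have hsumk : ∀ i : Fin d, (∑ k : Fin d, a (i + k)) = (d:ℝ) := by
      intro i
      rw [← hsum]
      exact Fintype.sum_equiv (Equiv.addLeft i) _ _ fun k => rfl
    have hkey : (∑ k : Fin d, (∑ i, a (i + k) * X i ω - t)) = (d:ℝ) * (∑ i, X i ω - t) := by
      rw [Finset.sum_sub_distrib, Finset.sum_comm]
      simp only [← Finset.sum_mul, hsumk]
      rw [Finset.sum_const, Finset.card_univ, Fintype.card_fin, nsmul_eq_mul,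
        mul_sub, Finset.mul_sum]
    have h1 : (∑ i, X i ω - t) = (d:ℝ)⁻¹ * ∑ k : Fin d, (∑ i, a (i + k) * X i ω - t) := by
      rw [hkey, inv_mul_cancel_left₀ (ne_of_gt hdR)]
    rw [h1]
    have h2 : max ((d:ℝ)⁻¹ * ∑ k : Fin d, (∑ i, a (i + k) * X i ω - t)) 0
        = (d:ℝ)⁻¹ * max (∑ k : Fin d, (∑ i, a (i + k) * X i ω - t)) 0 := by
      rw [mul_max_of_nonneg _ _ (inv_nonneg.mpr hdR.le), mul_zero]
    rw [h2]
    refine mul_le_mul_of_nonneg_left ?_ (inv_nonneg.mpr hdR.le)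
    exact max_le (Finset.sum_le_sum fun k _ => le_max_left _ _)
      (Finset.sum_nonneg fun k _ => le_max_right _ _)
  -- put everything together
  calc (∫ ω, max (∑ i, X i ω - t) 0 ∂μ)
      ≤ ∫ ω, (d:ℝ)⁻¹ * ∑ k : Fin d, max (∑ i, a (i + k) * X i ω - t) 0 ∂μ := by
        refine integral_mono hFint ?_ hpt
        exact ((integrable_finset_sum _ fun k _ => hG _).const_mul _)
    _ = (d:ℝ)⁻¹ * ∑ k : Fin d, ∫ ω, max (∑ i, a (i + k) * X i ω - t) 0 ∂μ := by
        rw [integral_const_mul, integral_finset_sum _ fun k _ => hG _]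
    _ = (d:ℝ)⁻¹ * ∑ _k : Fin d, ∫ ω, max (∑ i, a i * X i ω - t) 0 ∂μ := by
        rw [Finset.sum_congr rfl fun k _ => hEq k]
    _ = ∫ ω, max (∑ i, a i * X i ω - t) 0 ∂μ := by
        rw [Finset.sum_const, Finset.card_univ, Fintype.card_fin, nsmul_eq_mul,
          inv_mul_cancel_left₀ (ne_of_gt hdR)]
end
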